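/- Let G be an r-regular graph (r ≥ 2) with n vertices and m = nr/2 edges, and let H be a regular graph on the same n vertices whose adjacency matrix commutes with that of G. Let x_1 = n^{-1/2}·𝟙, x_2, …, x_n be an orthonormal basis of ℝⁿ of common eigenvectors of L(G) and L(H), with eigenvalues μ_i(G) and μ_i(H) respectively (μ_1(G) = μ_1(H) = 0). Then the characteristic polynomial of the Laplacian of [S(G)]_{co-𝓛(G)}^{H}, namely of the block matrix [[L(H) + r·I_n, −B(G)],[−B(G)ᵀ, (m−2r+2)·I_m − J_m + B(G)ᵀB(G)]], equals x·(x − (r+2))·(x − (m−2r+2))^{m−n} · ∏_{i=2}^{n} ( x² − (t_i + r + μ_i(H))x + t_i(r + μ_i(H)) + μ_i(G) − 2r ), where t_i = m − μ_i(G) + 2. -/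

import Mathlib

open Matrix SimpleGraph

/-- The `n × m` vertex–edge incidence matrix of a graph, relative to an
enumeration `e` of its edges. -/
noncomputable def incMat {V : Type} [Fintype V] [DecidableEq V] {m : ℕ}
    (G : SimpleGraph V) [Fintype G.edgeSet] (e : Fin m ≃ G.edgeFinset) :
    Matrix V (Fin m) ℝ :=
  Matrix.of fun i j => if i ∈ (e j : Sym2 V) then (1 : ℝ) else 0

open Polynomial in
lemma xsmul_one_sub_map {ι : Type} [Fintype ι] [DecidableEq ι] (M : Matrix ι ι ℝ) :
    (X : ℝ[X]) • (1 : Matrix ι ι ℝ[X]) - M.map C = charmatrix M := by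
  ext i j
  by_cases h : i = j <;>
    simp [h, charmatrix_apply, Matrix.smul_apply, Matrix.one_apply, Matrix.map_apply,
      Matrix.diagonal_apply, scalar_apply]

open Polynomial in
lemma eval_det_xsmul {ι : Type} [Fintype ι] [DecidableEq ι] (M : Matrix ι ι ℝ) (x : ℝ) :
    (Matrix.det ((X : ℝ[X]) • (1 : Matrix ι ι ℝ[X]) - M.map C)).eval x
      = (x • (1 : Matrix ι ι ℝ) - M).det := by
  rw [← coe_evalRingHom, RingHom.map_det]
  congr 1
  ext i j
  simp [Matrix.map_apply, Matrix.sub_apply, Matrix.smul_apply, Matrix.one_apply, apply_ite]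

lemma core_generic (n m : ℕ) (hnm : n ≤ m) (B : Matrix (Fin n) (Fin m) ℝ)
    (A11 K : Matrix (Fin n) (Fin n) ℝ) (c x : ℝ) (hx : x - c ≠ 0)
    (hA : ((x - c) • (1 : Matrix (Fin n) (Fin n) ℝ) - K * (B * Bᵀ)).det ≠ 0) :
    (Matrix.fromBlocks (x • 1 - A11) B Bᵀ
        ((x - c) • (1 : Matrix (Fin m) (Fin m) ℝ) - Bᵀ * (K * B))).det
      = (x - c) ^ (m - n) *
        ((x • 1 - A11) * ((x - c) • (1 : Matrix (Fin n) (Fin n) ℝ) - K * (B * Bᵀ)) - B * Bᵀ).det := by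
  set α := x - c with hα
  set Q := B * Bᵀ with hQdef
  set A : Matrix (Fin n) (Fin n) ℝ := α • 1 - K * Q with hA'
  set D : Matrix (Fin m) (Fin m) ℝ := α • 1 - Bᵀ * (K * B) with hD
  set P : Matrix (Fin n) (Fin n) ℝ := x • 1 - A11 with hP
  have e1 : D = α • ((1 : Matrix (Fin m) (Fin m) ℝ) + (-(α⁻¹) • Bᵀ) * (K * B)) := by
    rw [Matrix.smul_mul, smul_add, smul_smul, mul_neg, mul_inv_cancel₀ hx, neg_smul, one_smul,
      ← sub_eq_add_neg]
  have e2 : A = α • ((1 : Matrix (Fin n) (Fin n) ℝ) + (-(α⁻¹)) • (K * Q)) := by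
    rw [smul_add, smul_smul, mul_neg, mul_inv_cancel₀ hx, neg_smul, one_smul, ← sub_eq_add_neg]
  have e3 : (K * B) * (-(α⁻¹) • Bᵀ) = (-(α⁻¹)) • (K * Q) := by
    rw [Matrix.mul_smul, Matrix.mul_assoc, hQdef]
  have hDdet : D.det = α ^ (m - n) * A.det := by
    rw [e1, Matrix.det_smul, Matrix.det_one_add_mul_comm, e3, e2, Matrix.det_smul,
      ← mul_assoc, ← pow_add, Fintype.card_fin, Fintype.card_fin, Nat.sub_add_cancel hnm]
  have hDdet0 : D.det ≠ 0 := by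
    rw [hDdet]; exact mul_ne_zero (pow_ne_zero _ hx) hA
  haveI iA : Invertible A := A.invertibleOfIsUnitDet (isUnit_iff_ne_zero.mpr hA)
  haveI iD : Invertible D := D.invertibleOfIsUnitDet (isUnit_iff_ne_zero.mpr hDdet0)
  have push : D * Bᵀ = Bᵀ * A := by
    rw [hD, hA', Matrix.sub_mul, Matrix.mul_sub, Matrix.smul_mul, Matrix.mul_smul,
      Matrix.one_mul, Matrix.mul_one, Matrix.mul_assoc, Matrix.mul_assoc, hQdef]
  have h2 : ⅟D * Bᵀ = Bᵀ * ⅟A := by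
    have h := congrArg (fun M => ⅟D * M * ⅟A) push
    simp only [← Matrix.mul_assoc] at h
    rw [invOf_mul_self, Matrix.one_mul] at h
    rw [Matrix.mul_assoc (⅟D * Bᵀ), mul_invOf_self, Matrix.mul_one] at h
    exact h.symm
  have hBD : B * ⅟D * Bᵀ = Q * ⅟A := by
    rw [Matrix.mul_assoc, h2, ← Matrix.mul_assoc, hQdef]
  have key : (P - B * ⅟D * Bᵀ) * A = P * A - Q := by
    rw [hBD, Matrix.sub_mul, Matrix.mul_assoc, invOf_mul_self, Matrix.mul_one]
  have hdet2 : (P - B * ⅟D * Bᵀ).det * A.det = (P * A - Q).det := by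
    rw [← Matrix.det_mul, key]
  rw [Matrix.det_fromBlocks₂₂, hDdet, mul_assoc, mul_comm A.det, hdet2]

open Polynomial in
lemma core_all (n m : ℕ) (hnm : n ≤ m) (B : Matrix (Fin n) (Fin m) ℝ)
    (A11 K : Matrix (Fin n) (Fin n) ℝ) (c x : ℝ) :
    (Matrix.fromBlocks (x • 1 - A11) B Bᵀ
        ((x - c) • (1 : Matrix (Fin m) (Fin m) ℝ) - Bᵀ * (K * B))).det
      = (x - c) ^ (m - n) *
        ((x • 1 - A11) * ((x - c) • (1 : Matrix (Fin n) (Fin n) ℝ) - K * (B * Bᵀ)) - B * Bᵀ).det := by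
  set Q := B * Bᵀ with hQdef
  set Mbig : Matrix (Fin n ⊕ Fin m) (Fin n ⊕ Fin m) ℝ :=
    Matrix.fromBlocks A11 (-B) (-Bᵀ) (c • 1 + Bᵀ * (K * B)) with hMbig
  have hblocks : ∀ y : ℝ, y • (1 : Matrix (Fin n ⊕ Fin m) (Fin n ⊕ Fin m) ℝ) - Mbig =
      Matrix.fromBlocks (y • 1 - A11) B Bᵀ ((y - c) • 1 - Bᵀ * (K * B)) := by
    intro y
    ext (i | i) (j | j) <;>
      simp [hMbig, Matrix.fromBlocks, Matrix.sub_apply, Matrix.smul_apply, Matrix.one_apply,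
        Matrix.add_apply, sub_smul, Matrix.neg_apply] <;> ring
  set MA : Matrix (Fin n) (Fin n) ℝ := c • 1 + K * Q with hMA
  have hAeq : ∀ y : ℝ, (y - c) • (1 : Matrix (Fin n) (Fin n) ℝ) - K * Q = y • 1 - MA := by
    intro y
    rw [hMA, sub_smul]
    abel
  set pL : ℝ[X] := ((X : ℝ[X]) • (1 : Matrix (Fin n ⊕ Fin m) (Fin n ⊕ Fin m) ℝ[X]) - Mbig.map C).det
    with hpL
  set Npoly : Matrix (Fin n) (Fin n) ℝ[X] :=
    ((X : ℝ[X]) • 1 - A11.map C) * (((X : ℝ[X]) - C c) • 1 - (K * Q).map C) - Q.map C with hNpoly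
  set pR : ℝ[X] := ((X : ℝ[X]) - C c) ^ (m - n) * Npoly.det with hpR
  have hL : ∀ y : ℝ, pL.eval y = (y • (1 : Matrix (Fin n ⊕ Fin m) (Fin n ⊕ Fin m) ℝ) - Mbig).det :=
    fun y => eval_det_xsmul Mbig y
  have hmapN : ∀ y : ℝ, Npoly.map ⇑(evalRingHom y) = (y • 1 - A11) * ((y - c) • 1 - K * Q) - Q := by
    intro y
    have ha : ((X : ℝ[X]) • (1 : Matrix (Fin n) (Fin n) ℝ[X])).map ⇑(evalRingHom y) = y • 1 := by
      ext i j
      by_cases h : i = j <;>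
        simp [h, Matrix.map_apply, Matrix.smul_apply, Matrix.one_apply]
    have hb : (((X : ℝ[X]) - C c) • (1 : Matrix (Fin n) (Fin n) ℝ[X])).map ⇑(evalRingHom y)
        = (y - c) • 1 := by
      ext i j
      by_cases h : i = j <;>
        simp [h, Matrix.map_apply, Matrix.smul_apply, Matrix.one_apply]
    have hc : ∀ (M : Matrix (Fin n) (Fin n) ℝ), (M.map C).map ⇑(evalRingHom y) = M := by
      intro M; ext i j; simp [Matrix.map_apply]
    rw [hNpoly]
    simp only [← RingHom.mapMatrix_apply, map_sub, _root_.map_mul]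
    simp only [RingHom.mapMatrix_apply]
    rw [ha, hb, hc, hc, hc]
  have hR : ∀ y : ℝ, pR.eval y
      = (y - c) ^ (m - n) * ((y • 1 - A11) * ((y - c) • 1 - K * Q) - Q).det := by
    intro y
    rw [hpR, Polynomial.eval_mul, Polynomial.eval_pow, Polynomial.eval_sub, Polynomial.eval_X,
      Polynomial.eval_C]
    congr 1
    rw [← coe_evalRingHom, RingHom.map_det, RingHom.mapMatrix_apply, hmapN]
  set pA : ℝ[X] := ((X : ℝ[X]) • (1 : Matrix (Fin n) (Fin n) ℝ[X]) - MA.map C).det with hpA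
  have hpA0 : pA ≠ 0 := by
    rw [hpA, xsmul_one_sub_map]
    exact (Matrix.charpoly_monic MA).ne_zero
  have hinf : {y : ℝ | pL.eval y = pR.eval y}.Infinite := by
    apply Set.Infinite.mono (s := ({c} ∪ {y : ℝ | pA.IsRoot y})ᶜ)
    · intro y hy
      simp only [Set.mem_compl_iff, Set.mem_union, Set.mem_singleton_iff, Set.mem_setOf_eq,
        not_or] at hy
      have hyc : y - c ≠ 0 := sub_ne_zero.mpr hy.1
      have hdet : ((y - c) • (1 : Matrix (Fin n) (Fin n) ℝ) - K * Q).det ≠ 0 := by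
        rw [hAeq y, ← eval_det_xsmul MA y]
        exact hy.2
      have := core_generic n m hnm B A11 K c y hyc hdet
      simp only [Set.mem_setOf_eq]
      rw [hL y, hR y, hblocks y]
      exact this
    · exact Set.Finite.infinite_compl
        ((Set.finite_singleton c).union (pA.finite_setOf_isRoot hpA0))
  have hpq : pL = pR := Polynomial.eq_of_infinite_eval_eq pL pR hinf
  have := hR x
  rw [← hpq, hL x, hblocks x] at this
  exact this

lemma incMat_eq_incMatrix {V : Type} [Fintype V] [DecidableEq V] {m : ℕ}
    (G : SimpleGraph V) [DecidableRel G.Adj] [Fintype G.edgeSet] (e : Fin m ≃ G.edgeFinset) (i : V) (t : Fin m) :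
    incMat G e i t = G.incMatrix ℝ i ((e t : Sym2 V)) := by
  classical
  rw [incMat, incMatrix_apply']
  simp only [Matrix.of_apply]
  congr 1
  simp only [eq_iff_iff]
  constructor
  · intro h
    exact ⟨mem_edgeFinset.mp (e t).2, h⟩
  · exact fun h => h.2

lemma incMat_colsum {V : Type} [Fintype V] [DecidableEq V] {m : ℕ}
    (G : SimpleGraph V) [Fintype G.edgeSet] (e : Fin m ≃ G.edgeFinset) (t : Fin m) :
    ∑ i, incMat G e i t = (2 : ℝ) := by
  classical
  simp only [incMat_eq_incMatrix]
  exact G.sum_incMatrix_apply_of_mem_edgeSet (mem_edgeFinset.mp (e t).2)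

lemma incMat_mul_transpose {n : ℕ} (G : SimpleGraph (Fin n)) [DecidableRel G.Adj]
    [Fintype G.edgeSet] {m r : ℕ} (hG : G.IsRegularOfDegree r) (e : Fin m ≃ G.edgeFinset) :
    incMat G e * (incMat G e)ᵀ = (2 * (r : ℝ)) • 1 - G.lapMatrix ℝ := by
  have key : incMat G e * (incMat G e)ᵀ = G.incMatrix ℝ * (G.incMatrix ℝ)ᵀ := by
    ext i j
    rw [Matrix.mul_apply, Matrix.mul_apply]
    have : ∀ t : Fin m, incMat G e i t * (incMat G e)ᵀ t j
        = (fun s : Sym2 (Fin n) => G.incMatrix ℝ i s * G.incMatrix ℝ j s) ((e t : Sym2 (Fin n))) := by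
      intro t
      simp [incMat_eq_incMatrix, Matrix.transpose_apply]
    calc ∑ t : Fin m, incMat G e i t * (incMat G e)ᵀ t j
        = ∑ t : Fin m, (fun s : G.edgeFinset =>
            G.incMatrix ℝ i (s : Sym2 (Fin n)) * G.incMatrix ℝ j (s : Sym2 (Fin n))) (e t) :=
          Finset.sum_congr rfl fun t _ => this t
      _ = ∑ s : G.edgeFinset,
            G.incMatrix ℝ i (s : Sym2 (Fin n)) * G.incMatrix ℝ j (s : Sym2 (Fin n)) :=
          by exact Equiv.sum_comp e (fun s : G.edgeFinset =>
            G.incMatrix ℝ i (s : Sym2 (Fin n)) * G.incMatrix ℝ j (s : Sym2 (Fin n)))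
      _ = ∑ s ∈ G.edgeFinset, G.incMatrix ℝ i s * G.incMatrix ℝ j s :=
          Finset.sum_coe_sort G.edgeFinset (fun s => G.incMatrix ℝ i s * G.incMatrix ℝ j s)
      _ = ∑ s : Sym2 (Fin n), G.incMatrix ℝ i s * G.incMatrix ℝ j s := by
          refine Finset.sum_subset (Finset.subset_univ _) ?_
          intro s _ hs
          have hni : s ∉ G.incidenceSet i := fun h => hs (mem_edgeFinset.mpr h.1)
          simp [G.incMatrix_of_notMem_incidenceSet hni]
      _ = ∑ s : Sym2 (Fin n), G.incMatrix ℝ i s * (G.incMatrix ℝ)ᵀ s j := rfl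
  rw [key, G.incMatrix_mul_transpose]
  ext i j
  by_cases h : i = j
  · subst h
    simp [lapMatrix, degMatrix, Matrix.sub_apply, Matrix.smul_apply, Matrix.one_apply,
      hG i, adjMatrix_apply, G.irrefl]
    ring
  · simp [h, lapMatrix, degMatrix, Matrix.sub_apply, Matrix.smul_apply, Matrix.one_apply,
      Matrix.diagonal_apply, adjMatrix_apply]

lemma incMat_K_mul {n m : ℕ} (G : SimpleGraph (Fin n)) [Fintype G.edgeSet]
    (e : Fin m ≃ G.edgeFinset) :
    (incMat G e)ᵀ * (((1 : Matrix (Fin n) (Fin n) ℝ)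
        - (4 : ℝ)⁻¹ • Matrix.of (fun _ _ => (1 : ℝ))) * incMat G e)
      = (incMat G e)ᵀ * incMat G e - Matrix.of (fun _ _ => (1 : ℝ)) := by
  set B := incMat G e with hB
  have hJB : (Matrix.of (fun _ _ => (1 : ℝ)) : Matrix (Fin n) (Fin n) ℝ) * B
      = Matrix.of (fun _ _ => (2 : ℝ)) := by
    ext i s
    rw [Matrix.mul_apply]
    simp only [Matrix.of_apply, one_mul]
    exact incMat_colsum G e s
  have hBJ : Bᵀ * (Matrix.of (fun _ _ => (2 : ℝ)) : Matrix (Fin n) (Fin m) ℝ)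
      = (4 : ℝ) • Matrix.of (fun _ _ => (1 : ℝ)) := by
    ext t s
    rw [Matrix.mul_apply]
    simp only [Matrix.of_apply, Matrix.transpose_apply, Matrix.smul_apply, smul_eq_mul, mul_one]
    rw [← Finset.sum_mul, incMat_colsum G e t]
    norm_num
  rw [Matrix.sub_mul, Matrix.one_mul, Matrix.mul_sub, Matrix.smul_mul, Matrix.mul_smul, hJB, hBJ,
    smul_smul]
  norm_num

/-- `L`-characteristic polynomial of $[S(G)]_{\overline{\mathcal L(G)}}^{H}$. -/
theorem stmt_5 (n m r : ℕ) (hr : 2 ≤ r) (hn : 0 < n) (hm : n * r = 2 * m)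
    (G H : SimpleGraph (Fin n)) [DecidableRel G.Adj] [DecidableRel H.Adj]
    [Fintype G.edgeSet]
    (hG : G.IsRegularOfDegree r) (rH : ℕ) (hH : H.IsRegularOfDegree rH)
    (hcomm : G.adjMatrix ℝ * H.adjMatrix ℝ = H.adjMatrix ℝ * G.adjMatrix ℝ)
    (e : Fin m ≃ G.edgeFinset)
    (v : Fin n → (Fin n → ℝ)) (μG μH : Fin n → ℝ)
    (hortho : ∀ i j, v i ⬝ᵥ v j = if i = j then 1 else 0)
    (hv0 : ∀ k, v ⟨0, hn⟩ k = 1 / Real.sqrt n)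
    (heigG : ∀ i, (G.lapMatrix ℝ).mulVec (v i) = μG i • v i)
    (heigH : ∀ i, (H.lapMatrix ℝ).mulVec (v i) = μH i • v i)
    (hμG0 : μG ⟨0, hn⟩ = 0) (hμH0 : μH ⟨0, hn⟩ = 0)
    (x : ℝ) :
    (x • (1 : Matrix (Fin n ⊕ Fin m) (Fin n ⊕ Fin m) ℝ) -
        Matrix.fromBlocks (H.lapMatrix ℝ + (r : ℝ) • 1)
          (-(incMat G e)) (-(incMat G e)ᵀ)
          (((m : ℝ) - 2 * (r : ℝ) + 2) • (1 : Matrix (Fin m) (Fin m) ℝ) -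
            Matrix.of (fun _ _ => (1 : ℝ)) + (incMat G e)ᵀ * incMat G e)).det
      = x * (x - ((r : ℝ) + 2)) * (x - ((m : ℝ) - 2 * (r : ℝ) + 2)) ^ (m - n) *
          ∏ i ∈ Finset.univ.erase (⟨0, hn⟩ : Fin n),
            (x ^ 2 - (((m : ℝ) - μG i + 2) + (r : ℝ) + μH i) * x +
              ((m : ℝ) - μG i + 2) * ((r : ℝ) + μH i) + μG i - 2 * (r : ℝ)) := by
  classical
  have hnm : n ≤ m := by
    have h2n : n * 2 ≤ n * r := Nat.mul_le_mul_left n hr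
    omega
  set i0 : Fin n := (⟨0, hn⟩ : Fin n) with hi0
  set B := incMat G e with hB
  set LG := G.lapMatrix ℝ with hLG
  set LH := H.lapMatrix ℝ with hLH
  set Jn : Matrix (Fin n) (Fin n) ℝ := Matrix.of (fun _ _ => (1 : ℝ)) with hJn
  set K : Matrix (Fin n) (Fin n) ℝ := 1 - (4 : ℝ)⁻¹ • Jn with hK
  set A11 : Matrix (Fin n) (Fin n) ℝ := LH + (r : ℝ) • 1 with hA11
  set c : ℝ := (m : ℝ) - 2 * (r : ℝ) + 2 with hc
  have hQ : B * Bᵀ = (2 * (r : ℝ)) • 1 - LG := incMat_mul_transpose G hG e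
  have hKB : Bᵀ * (K * B) = Bᵀ * B - Matrix.of (fun _ _ => (1 : ℝ)) := incMat_K_mul G e
  have hident : x • (1 : Matrix (Fin n ⊕ Fin m) (Fin n ⊕ Fin m) ℝ) -
        Matrix.fromBlocks A11 (-B) (-Bᵀ)
          (c • (1 : Matrix (Fin m) (Fin m) ℝ) - Matrix.of (fun _ _ => (1 : ℝ)) + Bᵀ * B)
      = Matrix.fromBlocks (x • 1 - A11) B Bᵀ ((x - c) • 1 - Bᵀ * (K * B)) := by
    rw [hKB]
    ext (i | i) (j | j) <;>
      simp [Matrix.fromBlocks, Matrix.sub_apply, Matrix.smul_apply, Matrix.one_apply,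
        Matrix.add_apply, sub_smul, Matrix.neg_apply] <;> ring
  rw [hident, core_all n m hnm B A11 K c x]
  -- eigen computations
  have hsqrt : Real.sqrt n ≠ 0 := by
    have : (0 : ℝ) < n := by exact_mod_cast hn
    positivity
  have hnn : Real.sqrt n * Real.sqrt n = (n : ℝ) := by
    exact Real.mul_self_sqrt (by positivity)
  set lam : Fin n → ℝ := fun j =>
    (x - ((r : ℝ) + μH j)) *
        ((x - c) - (2 * (r : ℝ) - μG j) * (1 - (if j = i0 then (n : ℝ) / 4 else 0)))
      - (2 * (r : ℝ) - μG j) with hlam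
  have hJmul : ∀ j, Jn.mulVec (v j) = (if j = i0 then (n : ℝ) else 0) • v j := by
    intro j
    have h := hortho i0 j
    rw [dotProduct] at h
    simp only [hv0] at h
    rw [← Finset.mul_sum] at h
    have h2 : Real.sqrt n * ((1 / Real.sqrt n) * ∑ k, v j k)
        = Real.sqrt n * (if i0 = j then 1 else 0) := by rw [h]
    rw [← mul_assoc, mul_one_div, div_self hsqrt, one_mul] at h2
    funext i
    rw [Matrix.mulVec, dotProduct]
    simp only [hJn, Matrix.of_apply, one_mul]
    rw [h2]
    by_cases hj : j = i0
    · subst hj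
      simp only [Pi.smul_apply, smul_eq_mul, hv0, eq_self_iff_true, if_true, mul_one]
      rw [mul_one_div, eq_div_iff hsqrt]
      linarith [hnn]
    · rw [if_neg (fun hh => hj hh.symm)]
      simp [hj]
  have hmulN : ∀ j, ((x • 1 - A11) * ((x - c) • (1 : Matrix (Fin n) (Fin n) ℝ) - K * (B * Bᵀ))
      - B * Bᵀ).mulVec (v j) = lam j • v j := by
    intro j
    have hQv : (B * Bᵀ).mulVec (v j) = (2 * (r : ℝ) - μG j) • v j := by
      rw [hQ, Matrix.sub_mulVec, Matrix.smul_mulVec, Matrix.one_mulVec, heigG, sub_smul]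
    have hKQv : (K * (B * Bᵀ)).mulVec (v j)
        = ((2 * (r : ℝ) - μG j) * (1 - (if j = i0 then (n : ℝ) / 4 else 0))) • v j := by
      rw [← Matrix.mulVec_mulVec, hQv, Matrix.mulVec_smul, hK, Matrix.sub_mulVec,
        Matrix.one_mulVec, Matrix.smul_mulVec, hJmul j]
      by_cases hj : j = i0 <;> simp [hj] <;> module
    have hA11v : A11.mulVec (v j) = ((r : ℝ) + μH j) • v j := by
      rw [hA11, Matrix.add_mulVec, heigH, Matrix.smul_mulVec, Matrix.one_mulVec]
      module
    have hinner : (((x - c) • (1 : Matrix (Fin n) (Fin n) ℝ) - K * (B * Bᵀ))) *ᵥ v j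
        = ((x - c) - (2 * (r : ℝ) - μG j) * (1 - (if j = i0 then (n : ℝ) / 4 else 0))) • v j := by
      rw [Matrix.sub_mulVec, Matrix.smul_mulVec, Matrix.one_mulVec, hKQv, ← sub_smul]
    rw [Matrix.sub_mulVec, ← Matrix.mulVec_mulVec, hinner, Matrix.mulVec_smul,
      Matrix.sub_mulVec, Matrix.smul_mulVec, Matrix.one_mulVec, hA11v, hQv, hlam]
    module
  set V : Matrix (Fin n) (Fin n) ℝ := Matrix.of (fun i j => v j i) with hV
  have hVV : Vᵀ * V = 1 := by
    ext i j
    rw [Matrix.mul_apply]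
    have h := hortho i j
    rw [dotProduct] at h
    simp only [hV, Matrix.transpose_apply, Matrix.of_apply, Matrix.one_apply]
    exact h
  have hdetV : V.det ≠ 0 := by
    have hone : V.det * V.det = 1 := by
      have h := congrArg Matrix.det hVV
      rwa [Matrix.det_mul, Matrix.det_one, Matrix.det_transpose] at h
    intro h
    rw [h, mul_zero] at hone
    exact zero_ne_one hone
  have hNV : ((x • 1 - A11) * ((x - c) • (1 : Matrix (Fin n) (Fin n) ℝ) - K * (B * Bᵀ))
      - B * Bᵀ) * V = V * Matrix.diagonal lam := by
    ext i j
    rw [Matrix.mul_apply, Matrix.mul_diagonal]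
    have h := congrFun (hmulN j) i
    rw [Matrix.mulVec, dotProduct] at h
    simp only [hV, Matrix.of_apply, Pi.smul_apply, smul_eq_mul] at h ⊢
    rw [h, mul_comm]
  have hdetN : ((x • 1 - A11) * ((x - c) • (1 : Matrix (Fin n) (Fin n) ℝ) - K * (B * Bᵀ))
      - B * Bᵀ).det = ∏ j, lam j := by
    have h := congrArg Matrix.det hNV
    rw [Matrix.det_mul, Matrix.det_mul, Matrix.det_diagonal, mul_comm V.det] at h
    exact mul_right_cancel₀ hdetV h
  rw [hdetN]
  have hcast : (n : ℝ) * r = 2 * m := by exact_mod_cast hm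
  have hprod : ∏ j, lam j = lam i0 * ∏ j ∈ Finset.univ.erase i0, lam j :=
    (Finset.mul_prod_erase Finset.univ lam (Finset.mem_univ i0)).symm
  have hlam0 : lam i0 = x * (x - ((r : ℝ) + 2)) := by
    simp only [hlam, hμG0, hμH0, eq_self_iff_true, if_true]
    rw [hc]
    linear_combination ((x - (r : ℝ)) / 2) * hcast
  have hrest : ∏ j ∈ Finset.univ.erase i0, lam j
      = ∏ j ∈ Finset.univ.erase i0,
          (x ^ 2 - (((m : ℝ) - μG j + 2) + (r : ℝ) + μH j) * x +
            ((m : ℝ) - μG j + 2) * ((r : ℝ) + μH j) + μG j - 2 * (r : ℝ)) := by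
    refine Finset.prod_congr rfl fun j hj => ?_
    have hj' : j ≠ i0 := (Finset.mem_erase.mp hj).1
    simp only [hlam]
    rw [if_neg hj', hc]
    ring
  rw [hprod, hlam0, hrest]
  ring
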